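/- (In ZFC) There is a nonempty, nowhere dense P-set X ⊆ ℕ* such that σ(X) = X. In particular, there is a nowhere dense P-set that is also a closed right ideal of (βℕ, +). -/

import Mathlib

open Filter Set Topology

noncomputable section

/-- `βℕ`: the space of ultrafilters on `ℕ` (the Stone–Čech compactification of `ℕ`). -/
abbrev βN := Ultrafilter ℕ

/-- `ℕ* = βℕ ∖ ℕ`: the free (nonprincipal) ultrafilters, i.e. those containing
every cofinite set. -/
def NStar : Set βN := {p | (p : Filter ℕ) ≤ Filter.cofinite}

/-- The shift map `σ : βℕ → βℕ`, the pushforward under `n ↦ n + 1`. -/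
def shift (p : βN) : βN := p.map (· + 1)

/-- Addition on `βℕ`: `A ∈ p + q ↔ {n | A − n ∈ p} ∈ q`, where `A − n = {m | m + n ∈ A}`. -/
def addU (p q : βN) : βN := q.bind fun n => p.map (· + n)

/-- A right ideal of `(βℕ, +)`: `I + βℕ ⊆ I`. -/
def IsRightIdeal (I : Set βN) : Prop := ∀ p ∈ I, ∀ q : βN, addU p q ∈ I

/-- A minimal right ideal: a nonempty right ideal not properly containing any
other (nonempty) right ideal. -/
def IsMinRightIdeal (I : Set βN) : Prop :=
  I.Nonempty ∧ IsRightIdeal I ∧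
    ∀ J : Set βN, J.Nonempty → IsRightIdeal J → J ⊆ I → J = I

/-- `A* = {p ∈ ℕ* | A ∈ p}`, as a subset of the subspace `ℕ*`. -/
def starSet (A : Set ℕ) : Set ↥NStar := {p | A ∈ (p : βN)}

/-- `F* = ⋂_{A ∈ F} A*` for a (free) filter `F` on `ℕ`. -/
def filterStar (F : Filter ℕ) : Set βN := ⋂ A ∈ F, {p : βN | A ∈ p}

/-- A closed `P`-set of the space `ℕ*`: for every countable collection of open
sets containing `X`, `X` is contained in the interior of the intersection. -/
def IsPSetSub (X : Set ↥NStar) : Prop :=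
  IsClosed X ∧ ∀ 𝒜 : Set (Set ↥NStar), 𝒜.Countable →
    (∀ U ∈ 𝒜, IsOpen U ∧ X ⊆ U) → X ⊆ interior (⋂₀ 𝒜)

/-- A subset of `βℕ` which lies in `ℕ*` and is a closed `P`-set of `ℕ*`. -/
def IsPSetIn (X : Set βN) : Prop :=
  X ⊆ NStar ∧ IsPSetSub (Subtype.val ⁻¹' X)

/-- `A ⊆ ℕ` is thick if it contains arbitrarily long intervals. -/
def Thick (A : Set ℕ) : Prop := ∀ k : ℕ, ∃ n : ℕ, Set.Icc n (n + k) ⊆ A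

/-- `A ⊆* B`: `A ∖ B` is finite. -/
def almostSub (A B : Set ℕ) : Prop := (A \ B).Finite

/-- The tower number `𝔱`: the least cardinality of a `⊆*`-chain of infinite subsets
of `ℕ` with no infinite pseudo-intersection. -/
def towerNum : Cardinal :=
  sInf {c : Cardinal | ∃ C : Set (Set ℕ), c = Cardinal.mk ↥C ∧ (∀ A ∈ C, A.Infinite) ∧
    IsChain almostSub C ∧ ¬∃ B : Set ℕ, B.Infinite ∧ ∀ A ∈ C, almostSub B A}

/-- `𝔱_Θ`: the least cardinality of a `⊆*`-chain of thick subsets of `ℕ` with no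
thick `⊆*`-lower bound. -/
def towerNumTheta : Cardinal :=
  sInf {c : Cardinal | ∃ C : Set (Set ℕ), c = Cardinal.mk ↥C ∧ (∀ A ∈ C, Thick A) ∧
    IsChain almostSub C ∧ ¬∃ B : Set ℕ, Thick B ∧ ∀ A ∈ C, almostSub B A}

/-- The pseudo-intersection number `𝔭`: the least cardinality of a filter base of
infinite subsets of `ℕ` (all finite intersections infinite) with no infinite
pseudo-intersection. -/
def pNum : Cardinal :=
  sInf {c : Cardinal | ∃ C : Set (Set ℕ), c = Cardinal.mk ↥C ∧
    (∀ S : Finset (Set ℕ), ↑S ⊆ C → (⋂ A ∈ S, A : Set ℕ).Infinite) ∧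
    ¬∃ B : Set ℕ, B.Infinite ∧ ∀ A ∈ C, almostSub B A}

/-- Chain transitivity for a dynamical system on a topological space, via open
covers: for every open cover `𝒰` and all `x, y` there is a `𝒰`-chain from `x` to `y`. -/
def ChainTransitive {X : Type*} [TopologicalSpace X] (f : X → X) : Prop :=
  ∀ 𝒰 : Set (Set X), (∀ U ∈ 𝒰, IsOpen U) → ⋃₀ 𝒰 = Set.univ →
    ∀ x y : X, ∃ (n : ℕ) (c : ℕ → X), c 0 = x ∧ c n = y ∧
      ∀ i < n, ∃ U ∈ 𝒰, f (c i) ∈ U ∧ c (i + 1) ∈ U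

lemma shift_mem_NStar {p : βN} (hp : p ∈ NStar) : shift p ∈ NStar := by
  have h1 : Filter.Tendsto (· + 1) Filter.cofinite Filter.cofinite :=
    Function.Injective.tendsto_cofinite (add_left_injective 1)
  simp only [NStar, Set.mem_setOf_eq, shift, Ultrafilter.coe_map] at *
  exact (Filter.map_mono hp).trans h1

/-- The shift map restricted to `ℕ*`. -/
def shiftStar (p : ↥NStar) : ↥NStar := ⟨shift p.1, shift_mem_NStar p.2⟩

open scoped ENNReal NNReal

def wgt : ℕ → ℝ≥0∞ := fun n => ((n : ℝ≥0∞) + 1)⁻¹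

lemma wgt_eq (n : ℕ) : wgt n = ((((n : ℝ≥0) + 1)⁻¹ : ℝ≥0) : ℝ≥0∞) := by
  simp [wgt, ENNReal.coe_inv (by positivity : ((n : ℝ≥0) + 1) ≠ 0)]

lemma wgt_ne_top (n : ℕ) : wgt n ≠ ⊤ := by rw [wgt_eq]; exact ENNReal.coe_ne_top

lemma wgt_anti {m n : ℕ} (h : m ≤ n) : wgt n ≤ wgt m := by
  apply ENNReal.inv_le_inv.2
  exact add_le_add_left (by exact_mod_cast h) 1

lemma wgt_succ_le (m : ℕ) : wgt m ≤ 2 * wgt (m + 1) := by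
  rw [wgt_eq, wgt_eq]
  rw [show ((2:ℝ≥0∞)) = ((2:ℝ≥0):ℝ≥0∞) by norm_num]
  rw [← ENNReal.coe_mul, ENNReal.coe_le_coe]
  have key : ((m:ℝ≥0) + 1 + 1) ≤ 2 * ((m:ℝ≥0) + 1) := by
    rw [two_mul]; gcongr; exact le_add_self
  have h1 : ((m:ℝ≥0) + 1) ≠ 0 := by positivity
  have h2 : (((m+1:ℕ):ℝ≥0) + 1) ≠ 0 := by positivity
  rw [inv_le_iff_one_le_mul₀ (by positivity)]
  calc (1:ℝ≥0) = (((m+1:ℕ):ℝ≥0)+1)⁻¹ * (((m+1:ℕ):ℝ≥0)+1) := (inv_mul_cancel₀ h2).symm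
    _ ≤ (((m+1:ℕ):ℝ≥0)+1)⁻¹ * (2 * ((m:ℝ≥0)+1)) := by gcongr; push_cast; exact key
    _ = 2 * (((m+1:ℕ):ℝ≥0)+1)⁻¹ * ((m:ℝ≥0)+1) := by ring
def SmallSet (C : Set ℕ) : Prop := ∑' n, C.indicator wgt n ≠ ⊤

lemma SmallSet.mono {C D : Set ℕ} (h : C ⊆ D) (hD : SmallSet D) : SmallSet C := by
  refine ne_top_of_le_ne_top hD (ENNReal.tsum_le_tsum fun n => ?_)
  exact Set.indicator_le_indicator_of_subset h (fun a => zero_le) n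

lemma SmallSet.union {C D : Set ℕ} (hC : SmallSet C) (hD : SmallSet D) :
    SmallSet (C ∪ D) := by
  have hle : ∀ n, (C ∪ D).indicator wgt n ≤ C.indicator wgt n + D.indicator wgt n := by
    intro n
    by_cases h : n ∈ C
    · calc (C ∪ D).indicator wgt n ≤ wgt n := Set.indicator_le_self _ _ n
        _ = C.indicator wgt n := (Set.indicator_of_mem h _).symm
        _ ≤ _ := le_self_add
    by_cases h2 : n ∈ D
    · calc (C ∪ D).indicator wgt n ≤ wgt n := Set.indicator_le_self _ _ n
        _ = D.indicator wgt n := (Set.indicator_of_mem h2 _).symm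
        _ ≤ _ := le_add_self
    · rw [Set.indicator_of_notMem (fun hn => hn.elim h h2)]
      exact zero_le
  refine ne_top_of_le_ne_top ?_ (ENNReal.tsum_le_tsum hle)
  rw [ENNReal.tsum_add]
  exact ENNReal.add_ne_top.2 ⟨hC, hD⟩

lemma SmallSet.of_finite {C : Set ℕ} (hC : C.Finite) : SmallSet C := by
  have h1 : ∑' n, C.indicator wgt n = ∑' n : C, wgt n := (tsum_subtype C wgt).symm
  rw [SmallSet, h1]
  haveI := hC.fintype
  rw [tsum_fintype]
  refine (ENNReal.sum_lt_top.2 ?_).ne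
  exact fun n _ => (wgt_ne_top n).lt_top

lemma not_smallSet_univ : ¬ SmallSet Set.univ := by
  intro h
  rw [SmallSet, Set.indicator_univ] at h
  have hw : (fun n : ℕ => ((((n : ℝ≥0) + 1)⁻¹ : ℝ≥0) : ℝ≥0∞)) = wgt := by
    funext n; exact (wgt_eq n).symm
  have h2 : Summable (fun n : ℕ => (((n : ℝ≥0) + 1)⁻¹ : ℝ≥0)) := by
    rw [← ENNReal.tsum_coe_ne_top_iff_summable, hw]; exact h
  have h3 : Summable (fun n : ℕ => (1 / ((n + 1 : ℕ) : ℝ) : ℝ)) := by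
    have h4 := NNReal.summable_coe.2 h2
    have : (fun n : ℕ => ((((n : ℝ≥0) + 1)⁻¹ : ℝ≥0) : ℝ)) =
        (fun n : ℕ => (1 / ((n + 1 : ℕ) : ℝ) : ℝ)) := by
      funext n; push_cast; rw [one_div]
    rwa [this] at h4
  exact (mt (summable_nat_add_iff (f := fun n : ℕ => 1 / (n : ℝ)) 1).1
    Real.not_summable_one_div_natCast) h3
lemma SmallSet.preSucc {C : Set ℕ} (hC : SmallSet C) : SmallSet ((· + 1) ⁻¹' C) := by
  have hle : ∀ m, ((· + 1) ⁻¹' C).indicator wgt m ≤ 2 * C.indicator wgt (m + 1) := by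
    intro m
    by_cases h : m ∈ (· + 1) ⁻¹' C
    · rw [Set.indicator_of_mem h, Set.indicator_of_mem (show m + 1 ∈ C from h)]
      exact wgt_succ_le m
    · rw [Set.indicator_of_notMem h]; exact zero_le
  refine ne_top_of_le_ne_top ?_ (ENNReal.tsum_le_tsum hle)
  rw [ENNReal.tsum_mul_left]
  refine ENNReal.mul_ne_top (by norm_num) ?_
  refine ne_top_of_le_ne_top hC ?_
  exact ENNReal.tsum_comp_le_tsum_of_injective (add_left_injective 1) (C.indicator wgt)

lemma SmallSet.imageSucc {C : Set ℕ} (hC : SmallSet C) : SmallSet ((· + 1) '' C) := by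
  rw [SmallSet, tsum_eq_zero_add' ENNReal.summable]
  have h0 : ((· + 1) '' C).indicator wgt 0 = 0 := by
    apply Set.indicator_of_notMem
    rintro ⟨k, -, hk⟩
    simp at hk
  rw [h0, zero_add]
  refine ne_top_of_le_ne_top hC (ENNReal.tsum_le_tsum fun k => ?_)
  by_cases h : k + 1 ∈ (· + 1) '' C
  · rcases id h with ⟨j, hj, hjk⟩
    have hjk' : j = k := by simpa using hjk
    subst hjk'
    rw [Set.indicator_of_mem h, Set.indicator_of_mem hj]
    exact wgt_anti (Nat.le_succ _)
  · rw [Set.indicator_of_notMem h]; exact zero_le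

lemma SmallSet.preDecr {C : Set ℕ} (hC : SmallSet C) : SmallSet ((fun n => n - 1) ⁻¹' C) := by
  have hsub : (fun n => n - 1) ⁻¹' C ⊆ {0} ∪ ((· + 1) '' C) := by
    intro n hn
    rcases Nat.eq_zero_or_pos n with h0 | h1
    · exact Or.inl h0
    · exact Or.inr ⟨n - 1, hn, by simp; omega⟩
  exact SmallSet.mono hsub ((SmallSet.of_finite (Set.finite_singleton 0)).union hC.imageSucc)

lemma SmallSet.preAdd {C : Set ℕ} (hC : SmallSet C) (n : ℕ) : SmallSet ((· + n) ⁻¹' C) := by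
  induction n with
  | zero => simpa using hC
  | succ k ih =>
    have : ((· + (k + 1)) ⁻¹' C) = (· + 1) ⁻¹' ((· + k) ⁻¹' C) := by
      ext m
      simp only [Set.mem_preimage]
      rw [show m + (k + 1) = m + 1 + k from by omega]
    rw [this]
    exact ih.preSucc
lemma exists_infinite_small_subset {A : Set ℕ} (hA : A.Infinite) :
    ∃ B ⊆ A, B.Infinite ∧ SmallSet B := by
  have hgt : ∀ n : ℕ, ∃ a, a ∈ A ∧ 2 ^ n < a := by
    intro n
    have := (hA.diff (Set.finite_Iic (2 ^ n))).nonempty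
    obtain ⟨a, ha, ha2⟩ := this
    exact ⟨a, ha, by simpa using ha2⟩
  choose b hbA hb using hgt
  refine ⟨Set.range b, Set.range_subset_iff.2 hbA, ?_, ?_⟩
  · apply Set.infinite_of_not_bddAbove
    rw [not_bddAbove_iff]
    intro x
    exact ⟨b x, Set.mem_range_self x, lt_of_le_of_lt (Nat.lt_two_pow_self (n := x)).le (hb x)⟩
  · rw [SmallSet, ← tsum_subtype]
    have hsurj : Function.Surjective (Set.rangeFactorization b) :=
      Set.rangeFactorization_surjective
    refine ne_top_of_le_ne_top ?_
      (ENNReal.tsum_le_tsum_comp_of_surjective hsurj (fun x => wgt x))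
    have hle : ∀ n, wgt (b n) ≤ (2 : ℝ≥0∞)⁻¹ ^ n := by
      intro n
      rw [← ENNReal.inv_pow]
      refine le_trans (wgt_anti (show 2 ^ n ≤ b n from (hb n).le)) ?_
      apply ENNReal.inv_le_inv.2
      calc ((2 : ℝ≥0∞)) ^ n = ((2 ^ n : ℕ) : ℝ≥0∞) := by push_cast; ring
        _ ≤ ((2 ^ n : ℕ) : ℝ≥0∞) + 1 := le_self_add
    refine ne_top_of_le_ne_top ?_ (ENNReal.tsum_le_tsum hle)
    rw [ENNReal.tsum_geometric]
    simp [ENNReal.sub_eq_top_iff]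

lemma smallSet_tail {C : Set ℕ} (hC : SmallSet C) {ε : ℝ≥0∞} (hε : 0 < ε) :
    ∃ m : ℕ, ∑' n, (C ∩ Set.Ici m).indicator wgt n ≤ ε := by
  have htend := ENNReal.tendsto_sum_nat_add (C.indicator wgt) hC
  have hev := htend.eventually (eventually_le_nhds hε)
  obtain ⟨m, hm⟩ := hev.exists
  refine ⟨m, ?_⟩
  set S : Set ℕ := C ∩ Set.Ici m with hS
  have hψ : Function.Injective (fun x : S => (x : ℕ) - m) := by
    intro x y hxy
    have hx : m ≤ (x : ℕ) := x.2.2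
    have hy : m ≤ (y : ℕ) := y.2.2
    have h : (x : ℕ) - m = (y : ℕ) - m := hxy
    exact Subtype.ext (by omega)
  calc ∑' n, S.indicator wgt n = ∑' x : S, wgt x := (tsum_subtype S wgt).symm
    _ ≤ ∑' x : S, C.indicator wgt (((x : ℕ) - m) + m) := by
        refine ENNReal.tsum_le_tsum fun x => ?_
        obtain ⟨hxC, hxm⟩ := x.2
        simp only [Set.mem_Ici] at hxm
        rw [show (x : ℕ) - m + m = (x : ℕ) from by omega, Set.indicator_of_mem hxC]
    _ ≤ ∑' k, C.indicator wgt (k + m) :=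
        ENNReal.tsum_comp_le_tsum_of_injective hψ (fun k => C.indicator wgt (k + m))
    _ ≤ ε := hm

lemma smallSet_diagonal (C : ℕ → Set ℕ) (hC : ∀ i, SmallSet (C i)) :
    ∃ D : Set ℕ, SmallSet D ∧ ∀ i, (C i \ D).Finite := by
  have hhalf : ∀ i : ℕ, (0 : ℝ≥0∞) < 2⁻¹ ^ i := fun i =>
    pos_iff_ne_zero.2 (by simp)
  choose m hm using fun i => smallSet_tail (hC i) (hhalf i)
  refine ⟨⋃ i, C i ∩ Set.Ici (m i), ?_, ?_⟩
  · have hle : ∀ n, (⋃ i, C i ∩ Set.Ici (m i)).indicator wgt n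
        ≤ ∑' i, (C i ∩ Set.Ici (m i)).indicator wgt n := by
      intro n
      by_cases h : n ∈ ⋃ i, C i ∩ Set.Ici (m i)
      · obtain ⟨i, hi⟩ := Set.mem_iUnion.1 h
        rw [Set.indicator_of_mem h]
        calc wgt n = (C i ∩ Set.Ici (m i)).indicator wgt n :=
              (Set.indicator_of_mem hi _).symm
          _ ≤ _ := ENNReal.le_tsum i
      · rw [Set.indicator_of_notMem h]; exact zero_le
    refine ne_top_of_le_ne_top ?_ (ENNReal.tsum_le_tsum hle)
    rw [ENNReal.tsum_comm]
    refine ne_top_of_le_ne_top ?_ (ENNReal.tsum_le_tsum fun i => hm i)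
    rw [ENNReal.tsum_geometric]
    simp [ENNReal.sub_eq_top_iff]
  · intro i
    refine (Set.finite_Iio (m i)).subset ?_
    intro n ⟨hn1, hn2⟩
    by_contra hlt
    exact hn2 (Set.mem_iUnion.2 ⟨i, hn1, Set.mem_Ici.2 (not_lt.1 (fun h => hlt h))⟩)
/-- The filter of sets whose complement is small (dual of the summable ideal). -/
def coSmall : Filter ℕ where
  sets := {A | SmallSet Aᶜ}
  univ_sets := by
    simp only [Set.mem_setOf_eq, Set.compl_univ]
    exact SmallSet.of_finite Set.finite_empty
  sets_of_superset := by
    intro A B hA hAB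
    exact SmallSet.mono (Set.compl_subset_compl.2 hAB) hA
  inter_sets := by
    intro A B hA hB
    simp only [Set.mem_setOf_eq, Set.compl_inter]
    exact hA.union hB

lemma mem_coSmall {A : Set ℕ} : A ∈ coSmall ↔ SmallSet Aᶜ := Iff.rfl

instance : Filter.NeBot coSmall := by
  refine ⟨fun h => ?_⟩
  have : (∅ : Set ℕ) ∈ coSmall := h ▸ Filter.mem_bot
  rw [mem_coSmall, Set.compl_empty] at this
  exact not_smallSet_univ this

lemma coSmall_le_cofinite : coSmall ≤ Filter.cofinite := by
  intro A hA
  exact SmallSet.of_finite hA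
/-- The candidate set: ultrafilters extending `coSmall`. -/
def myX : Set βN := {p : βN | (↑p : Filter ℕ) ≤ coSmall}

lemma mem_myX {p : βN} : p ∈ myX ↔ ∀ A ∈ coSmall, A ∈ p := Filter.le_def

lemma myX_nonempty : myX.Nonempty := by
  obtain ⟨u, hu⟩ := Ultrafilter.exists_le coSmall
  exact ⟨u, hu⟩

lemma myX_subset_NStar : myX ⊆ NStar :=
  fun p hp => le_trans hp coSmall_le_cofinite

lemma isClosed_setOf_le (F : Filter ℕ) : IsClosed {p : βN | (↑p : Filter ℕ) ≤ F} := by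
  have h : {p : βN | (↑p : Filter ℕ) ≤ F} = ⋂ A ∈ F.sets, {p : βN | A ∈ p} := by
    ext p
    simp only [Set.mem_setOf_eq, Set.mem_iInter, Filter.le_def]
    rfl
  rw [h]
  exact isClosed_biInter fun A _ => ultrafilter_isClosed_basic A

lemma isClosed_myX : IsClosed myX := isClosed_setOf_le coSmall

lemma isClosed_NStar : IsClosed (NStar : Set βN) := isClosed_setOf_le Filter.cofinite

instance : CompactSpace ↥NStar :=
  isCompact_iff_compactSpace.1 isClosed_NStar.isCompact

lemma isOpen_starSet (A : Set ℕ) : IsOpen {q : ↥NStar | A ∈ (q : βN)} :=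
  (ultrafilter_isOpen_basic A).preimage continuous_subtype_val

lemma isClosed_myX' : IsClosed (Subtype.val ⁻¹' myX : Set ↥NStar) :=
  isClosed_myX.preimage continuous_subtype_val
lemma exists_base {U : Set ↥NStar} (hU : IsOpen U) (hXU : Subtype.val ⁻¹' myX ⊆ U) :
    ∃ A ∈ coSmall, (Subtype.val ⁻¹' myX ⊆ {q : ↥NStar | A ∈ (q : βN)}) ∧
      {q : ↥NStar | A ∈ (q : βN)} ⊆ U := by
  have hK : IsCompact Uᶜ := hU.isClosed_compl.isCompact
  have hcov : Uᶜ ⊆ ⋃ A : coSmall.sets, {q : ↥NStar | (A : Set ℕ)ᶜ ∈ (q : βN)} := by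
    intro q hq
    have hq2 : q ∉ Subtype.val ⁻¹' myX := fun h => hq (hXU h)
    rw [Set.mem_preimage, mem_myX] at hq2
    push_neg at hq2
    obtain ⟨A, hA, hAq⟩ := hq2
    exact Set.mem_iUnion.2 ⟨⟨A, hA⟩, Ultrafilter.compl_mem_iff_notMem.2 hAq⟩
  obtain ⟨t, ht⟩ := hK.elim_finite_subcover _
    (fun A : coSmall.sets => isOpen_starSet (A : Set ℕ)ᶜ) hcov
  have hImem : (⋂ A ∈ t, (A : Set ℕ)) ∈ coSmall :=
    (Filter.biInter_finset_mem t).2 fun A _ => A.2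
  refine ⟨⋂ A ∈ t, (A : Set ℕ), hImem, ?_, ?_⟩
  · intro q hq
    exact (mem_myX.1 hq) _ hImem
  · intro q hq
    by_contra hqU
    have hq2 := ht hqU
    obtain ⟨A, hAt, hAq⟩ := Set.mem_iUnion₂.1 (by exact_mod_cast hq2)
    have hAmem : (A : Set ℕ) ∈ (q : βN) :=
      (q : βN).mem_of_superset hq (Set.biInter_subset_of_mem hAt)
    exact Ultrafilter.compl_mem_iff_notMem.1 hAq hAmem

lemma pset_myX : IsPSetSub (Subtype.val ⁻¹' myX) := by
  refine ⟨isClosed_myX', ?_⟩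
  intro 𝒜 hcount hopen
  rcases 𝒜.eq_empty_or_nonempty with rfl | hne
  · simp
  obtain ⟨e, he⟩ := (Set.countable_iff_exists_surjective hne).1 hcount
  have hUi : ∀ i : ℕ, IsOpen (e i : Set ↥NStar) ∧ Subtype.val ⁻¹' myX ⊆ (e i : Set ↥NStar) := by
    intro i
    exact hopen _ (e i).2
  choose A hAmem hAstar hAsub using fun i =>
    exists_base (hUi i).1 (hUi i).2
  obtain ⟨D, hD, hfin⟩ := smallSet_diagonal (fun i => (A i)ᶜ)
    (fun i => mem_coSmall.1 (hAmem i))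
  have hBmem : Dᶜ ∈ coSmall := by rw [mem_coSmall, compl_compl]; exact hD
  have hsub : {q : ↥NStar | Dᶜ ∈ (q : βN)} ⊆ ⋂₀ 𝒜 := by
    intro q hq
    rw [Set.mem_sInter]
    intro U hU
    obtain ⟨i, hi⟩ := he ⟨U, hU⟩
    have hUeq : U = (e i : Set ↥NStar) := by rw [hi]
    rw [hUeq]
    refine hAsub i ?_
    have hF : ((A i)ᶜ \ D).Finite := hfin i
    have hFc : ((A i)ᶜ \ D)ᶜ ∈ (q : βN) := q.2 (by
      rw [Filter.mem_cofinite, compl_compl]; exact hF)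
    have hsub2 : Dᶜ ∩ ((A i)ᶜ \ D)ᶜ ⊆ A i := by
      intro n ⟨hn1, hn2⟩
      by_contra hn3
      exact hn2 ⟨hn3, hn1⟩
    exact (q : βN).mem_of_superset (Filter.inter_mem hq hFc) hsub2
  intro q hq
  have hq2 : q ∈ {q : ↥NStar | Dᶜ ∈ (q : βN)} := (mem_myX.1 hq) _ hBmem
  exact interior_maximal hsub (isOpen_starSet Dᶜ) hq2

lemma nwd_myX : IsNowhereDense (Subtype.val ⁻¹' myX : Set ↥NStar) := by
  rw [isClosed_myX'.isNowhereDense_iff, Set.eq_empty_iff_forall_notMem]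
  intro q hq
  obtain ⟨V, hV, hVeq⟩ := isOpen_induced_iff.1
    (isOpen_interior (s := (Subtype.val ⁻¹' myX : Set ↥NStar)))
  have hqV : (q : βN) ∈ V := by rw [← hVeq] at hq; exact hq
  obtain ⟨W, hWb, hqW, hWV⟩ := ultrafilterBasis_is_basis.exists_subset_of_mem_open hqV hV
  obtain ⟨s, rfl⟩ := hWb
  have hs : s ∈ (q : βN) := hqW
  have hs_inf : s.Infinite := by
    by_contra hfin
    rw [Set.not_infinite] at hfin
    have hsc : sᶜ ∈ (q : βN) := q.2 (by rw [Filter.mem_cofinite, compl_compl]; exact hfin)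
    exact Ultrafilter.compl_mem_iff_notMem.1 hsc hs
  obtain ⟨B, hBs, hBinf, hBsmall⟩ := exists_infinite_small_subset hs_inf
  haveI := hBinf.cofinite_inf_principal_neBot
  obtain ⟨u, hu⟩ := Ultrafilter.exists_le (Filter.cofinite ⊓ Filter.principal B)
  have huNStar : u ∈ NStar := hu.trans inf_le_left
  have huB : B ∈ u := hu (Filter.mem_inf_of_right (Filter.mem_principal_self B))
  have hus : s ∈ u := u.toFilter.mem_of_superset huB hBs
  have hmem : (⟨u, huNStar⟩ : ↥NStar) ∈ Subtype.val ⁻¹' myX := by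
    refine interior_subset (a := (⟨u, huNStar⟩ : ↥NStar)) ?_
    rw [← hVeq]
    exact Set.mem_preimage.2 (hWV hus)
  have hBc : Bᶜ ∈ u := (mem_myX.1 hmem) Bᶜ (by rw [mem_coSmall, compl_compl]; exact hBsmall)
  exact Ultrafilter.compl_mem_iff_notMem.1 hBc huB

lemma shift_myX : shift '' myX = myX := by
  apply Set.Subset.antisymm
  · rintro _ ⟨p, hp, rfl⟩
    rw [mem_myX]
    intro A hA
    rw [shift, Ultrafilter.mem_map]
    refine (mem_myX.1 hp) _ ?_
    rw [mem_coSmall, ← Set.preimage_compl]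
    exact (mem_coSmall.1 hA).preSucc
  · intro p hp
    refine ⟨p.map (fun n => n - 1), ?_, ?_⟩
    · rw [mem_myX]
      intro A hA
      rw [Ultrafilter.mem_map]
      refine (mem_myX.1 hp) _ ?_
      rw [mem_coSmall, ← Set.preimage_compl]
      exact (mem_coSmall.1 hA).preDecr
    · apply Ultrafilter.coe_injective
      rw [shift, Ultrafilter.coe_map, Ultrafilter.coe_map, Filter.map_map]
      have h1 : {n : ℕ | 1 ≤ n} ∈ (p : βN) := by
        refine (mem_myX.1 hp) _ ?_
        rw [mem_coSmall]
        have h0 : ({n : ℕ | 1 ≤ n})ᶜ = {0} := by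
          ext n; simp [Nat.lt_one_iff]
        rw [h0]
        exact SmallSet.of_finite (Set.finite_singleton 0)
      have hev : ((· + 1) ∘ (fun n : ℕ => n - 1)) =ᶠ[(p : Filter ℕ)] id := by
        filter_upwards [h1] with n hn
        simp only [Function.comp_apply, id_eq]
        omega
      rw [Filter.map_congr hev, Filter.map_id]

lemma rightIdeal_myX : IsRightIdeal myX := by
  intro p hp q
  rw [mem_myX]
  intro A hA
  have hall : ∀ n, A ∈ p.map (· + n) := by
    intro n
    rw [Ultrafilter.mem_map]
    refine (mem_myX.1 hp) _ ?_
    rw [mem_coSmall, ← Set.preimage_compl]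
    exact (mem_coSmall.1 hA).preAdd n
  show A ∈ (Filter.bind ↑q fun n => ↑(p.map (· + n)))
  rw [Filter.mem_bind']
  exact Filter.univ_mem' hall
/-- (ZFC) There is a nonempty, nowhere dense `P`-set `X ⊆ ℕ*` with
`σ(X) = X`; in particular there is a nowhere dense `P`-set that is also a closed
right ideal of `(βℕ, +)`. -/
theorem stmt12 :
    (∃ X : Set βN, X.Nonempty ∧ IsPSetIn X ∧
      IsNowhereDense (Subtype.val ⁻¹' X : Set ↥NStar) ∧ shift '' X = X) ∧
    (∃ Y : Set βN, Y.Nonempty ∧ IsPSetIn Y ∧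
      IsNowhereDense (Subtype.val ⁻¹' Y : Set ↥NStar) ∧
      IsRightIdeal Y ∧ IsClosed (Subtype.val ⁻¹' Y : Set ↥NStar)) := by
  exact ⟨⟨myX, myX_nonempty, ⟨myX_subset_NStar, pset_myX⟩, nwd_myX, shift_myX⟩,
    ⟨myX, myX_nonempty, ⟨myX_subset_NStar, pset_myX⟩, nwd_myX, rightIdeal_myX, isClosed_myX'⟩⟩

end
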